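/- Let n ≥ 3 and 1 ≤ k ≤ n−1 be integers, and let G be a simple connected graph on n vertices with vertex connectivity κ(G) ≤ k. Then Π1(G) ≥ (n−1)^2 with equality if and only if G is isomorphic to the star S_n, and Π2(G) ≥ 4^{n−2} with equality if and only if G is isomorphic to the path P_n. -/

import Mathlib

open SimpleGraph Finset

/-- Degree of a vertex (as `Nat.card` of its neighbor set). -/
noncomputable def mdeg {V : Type*} (G : SimpleGraph V) (v : V) : ℕ :=
  Nat.card (G.neighborSet v)

/-- First multiplicative Zagreb index. -/
noncomputable def mZ1 {V : Type*} [Fintype V] (G : SimpleGraph V) : ℕ :=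
  ∏ v : V, (mdeg G v) ^ 2

/-- Second multiplicative Zagreb index. -/
noncomputable def mZ2 {V : Type*} [Fintype V] (G : SimpleGraph V) : ℕ :=
  ∏ v : V, (mdeg G v) ^ (mdeg G v)

/-- `S` is a vertex cut of `G`: deleting `S` leaves a nonempty disconnected graph. -/
def IsVertexCut {V : Type*} (G : SimpleGraph V) (S : Finset V) : Prop :=
  ((↑S : Set V)ᶜ).Nonempty ∧ ¬ (G.induce ((↑S : Set V)ᶜ)).Connected

/-- The vertex connectivity of `G` is at most `k`: either `G` has a vertex cut of
size at most `k`, or `G` is complete with `n - 1 ≤ k` vertices. -/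
def VertexConnAtMost {V : Type*} [Fintype V] (G : SimpleGraph V) (k : ℕ) : Prop :=
  (∃ S : Finset V, S.card ≤ k ∧ IsVertexCut G S) ∨ (G = ⊤ ∧ Fintype.card V - 1 ≤ k)

/-- The star on `n` vertices, with center `0`. -/
def starGraph (n : ℕ) : SimpleGraph (Fin n) :=
  SimpleGraph.fromRel (fun u _ => u.val = 0)


lemma key_prod_ge {α : Type*} (s : Finset α) (f : α → ℕ) (h : ∀ i ∈ s, 1 ≤ f i) :
    s.sum f + 1 ≤ s.prod f + s.card := by
  induction s using Finset.cons_induction with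
  | empty => simp
  | cons a s ha ih =>
    have h1 : 1 ≤ f a := h a (Finset.mem_cons_self a s)
    have h2 : ∀ i ∈ s, 1 ≤ f i := fun i hi => h i (Finset.mem_cons.2 (Or.inr hi))
    have h3 := ih h2
    have hP : 1 ≤ s.prod f := Finset.one_le_prod' h2
    rw [Finset.sum_cons, Finset.prod_cons, Finset.card_cons]
    obtain ⟨p, hp⟩ : ∃ p, s.prod f = p + 1 := ⟨s.prod f - 1, by omega⟩
    obtain ⟨q, hq⟩ : ∃ q, f a = q + 1 := ⟨f a - 1, by omega⟩
    rw [hp, hq]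
    rw [hp] at h3
    nlinarith

lemma key_prod_ge_two {α : Type*} [DecidableEq α] (s : Finset α) (f : α → ℕ)
    (h : ∀ i ∈ s, 1 ≤ f i) (i j : α) (hi : i ∈ s) (hj : j ∈ s) (hij : i ≠ j)
    (h2i : 2 ≤ f i) (h2j : 2 ≤ f j) :
    s.sum f + 2 ≤ s.prod f + s.card := by
  have hj' : j ∈ s.erase i := Finset.mem_erase.2 ⟨hij.symm, hj⟩
  have hsub : ∀ x ∈ (s.erase i).erase j, 1 ≤ f x := fun x hx =>
    h x (Finset.mem_of_mem_erase (Finset.mem_of_mem_erase hx))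
  have key := key_prod_ge ((s.erase i).erase j) f hsub
  have hprod : s.prod f = f i * (f j * ((s.erase i).erase j).prod f) := by
    rw [Finset.mul_prod_erase _ _ hj', Finset.mul_prod_erase _ _ hi]
  have hsum : s.sum f = f i + (f j + ((s.erase i).erase j).sum f) := by
    rw [Finset.add_sum_erase _ _ hj', Finset.add_sum_erase _ _ hi]
  have hcard : s.card = ((s.erase i).erase j).card + 2 := by
    rw [Finset.card_erase_of_mem hj', Finset.card_erase_of_mem hi]
    have : 2 ≤ s.card := Finset.one_lt_card.2 ⟨i, hi, j, hj, hij⟩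
    omega
  have hP : 1 ≤ ((s.erase i).erase j).prod f := Finset.one_le_prod' hsub
  obtain ⟨p, hp⟩ : ∃ p, ((s.erase i).erase j).prod f = p + 1 := ⟨((s.erase i).erase j).prod f - 1, by omega⟩
  obtain ⟨q, hq⟩ : ∃ q, f i = q + 2 := ⟨f i - 2, by omega⟩
  obtain ⟨r, hr⟩ : ∃ r, f j = r + 2 := ⟨f j - 2, by omega⟩
  rw [hprod, hsum, hcard, hp, hq, hr]
  rw [hp] at key
  nlinarith [key, Nat.zero_le (q*r*p), Nat.zero_le (q*p), Nat.zero_le (r*p), Nat.zero_le (q*r)]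

lemma pow4_le (d : ℕ) (hd : 1 ≤ d) : 4 ^ (d - 1) ≤ d ^ d := by
  match d, hd with
  | 1, _ => norm_num
  | 2, _ => norm_num
  | 3, _ => norm_num
  | (m+4), _ =>
    calc 4 ^ (m + 4 - 1) ≤ 4 ^ (m + 4) := Nat.pow_le_pow_right (by norm_num) (by omega)
    _ ≤ (m + 4) ^ (m + 4) := Nat.pow_le_pow_left (by omega) _

lemma pow4_lt (d : ℕ) (hd : 3 ≤ d) : 4 ^ (d - 1) < d ^ d := by
  match d, hd with
  | 3, _ => norm_num
  | (m+4), _ =>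
    calc 4 ^ (m + 4 - 1) < 4 ^ (m + 4) := Nat.pow_lt_pow_right (by norm_num) (by omega)
    _ ≤ (m + 4) ^ (m + 4) := Nat.pow_le_pow_left (by omega) _

lemma mdeg_eq_degree {V : Type*} [Fintype V] (G : SimpleGraph V) [DecidableRel G.Adj] (v : V) :
    mdeg G v = G.degree v := by
  rw [mdeg, Nat.card_coe_set_eq, Set.ncard_eq_toFinset_card']
  simp [SimpleGraph.degree, SimpleGraph.neighborFinset]

lemma mdeg_map {V W : Type*} (G : SimpleGraph V) (G' : SimpleGraph W) (e : G ≃g G') (v : V) :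
    mdeg G v = mdeg G' (e v) :=
  Nat.card_congr (e.mapNeighborSet v)

lemma one_le_mdeg {V : Type*} [Fintype V] {G : SimpleGraph V} (hG : G.Connected)
    (h2 : 1 < Fintype.card V) (v : V) : 1 ≤ mdeg G v := by
  obtain ⟨w, hw⟩ := Fintype.exists_ne_of_one_lt_card h2 v
  obtain ⟨p⟩ := hG.preconnected v w
  cases p with
  | nil => exact absurd rfl hw
  | cons h q =>
    rw [mdeg, Nat.card_coe_set_eq]
    have hne : (G.neighborSet v).Nonempty := ⟨_, h⟩
    exact (Set.ncard_pos (Set.toFinite _)).mpr hne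

/-- a set closed under adjacency containing a vertex of a connected graph is everything -/
lemma closed_eq_univ {V : Type*} {G : SimpleGraph V} (hG : G.Connected) {S : Set V} {a : V}
    (haS : a ∈ S) (hcl : ∀ v ∈ S, ∀ w, G.Adj v w → w ∈ S) (v : V) : v ∈ S := by
  obtain ⟨p⟩ := hG.preconnected a v
  induction p with
  | nil => exact haS
  | cons h q ih => exact ih (hcl _ haS _ h)

lemma card_edges_lb {V : Type*} [Fintype V] [DecidableEq V] (G : SimpleGraph V)
    [DecidableRel G.Adj] (hG : G.Connected) :
    Fintype.card V - 1 ≤ G.edgeFinset.card := by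
  have hne : Nonempty V := hG.nonempty
  obtain ⟨r⟩ := hne
  classical
  have hex : ∀ v : V, v ≠ r → ∃ w, G.Adj v w ∧ G.dist w r + 1 = G.dist v r := by
    intro v hv
    have hdpos : 0 < G.dist v r := hG.pos_dist_of_ne hv
    obtain ⟨p, hp⟩ := hG.exists_walk_length_eq_dist v r
    cases p with
    | nil => simp at hp; simp at hdpos
    | @cons _ w _ h q =>
      refine ⟨w, h, ?_⟩
      have h1 : G.dist w r ≤ q.length := SimpleGraph.dist_le q
      have h2 : G.dist v r ≤ G.dist v w + G.dist w r := hG.dist_triangle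
      have h3 : G.dist v w = 1 := SimpleGraph.dist_eq_one_iff_adj.mpr h
      have h4 : q.length + 1 = G.dist v r := by
        simpa using hp
      omega
  set next : V → V := fun v => if h : ∃ w, G.Adj v w ∧ G.dist w r + 1 = G.dist v r
    then h.choose else v with hnext
  have hnextspec : ∀ v : V, v ≠ r → G.Adj v (next v) ∧ G.dist (next v) r + 1 = G.dist v r := by
    intro v hv
    have h := hex v hv
    simp only [hnext, dif_pos h]
    exact h.choose_spec
  have hcard : (Finset.univ.erase r).card = Fintype.card V - 1 := by
    simp [Finset.card_erase_of_mem]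
  rw [← hcard]
  apply Finset.card_le_card_of_injOn (fun v => s(v, next v))
  · intro v hv
    have hv' : v ≠ r := (Finset.mem_erase.1 hv).1
    simp only [Finset.mem_coe, SimpleGraph.mem_edgeFinset, SimpleGraph.mem_edgeSet]
    exact (hnextspec v hv').1
  · intro u hu v hv huv
    have hu' : u ≠ r := (Finset.mem_erase.1 hu).1
    have hv' : v ≠ r := (Finset.mem_erase.1 hv).1
    rcases Sym2.eq_iff.1 huv with ⟨h1, _⟩ | ⟨h1, h2⟩
    · exact h1
    · exfalso
      have d1 := (hnextspec u hu').2
      have d2 := (hnextspec v hv').2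
      rw [h2] at d1
      rw [← h1] at d2
      omega

lemma sum_mdeg_lb {V : Type*} [Fintype V] [DecidableEq V] (G : SimpleGraph V)
    [DecidableRel G.Adj] (hG : G.Connected) :
    2 * (Fintype.card V - 1) ≤ ∑ v, G.degree v := by
  rw [SimpleGraph.sum_degrees_eq_twice_card_edges]
  exact Nat.mul_le_mul_left 2 (card_edges_lb G hG)

lemma mdeg_eq_ncard {V : Type*} (G : SimpleGraph V) (v : V) :
    mdeg G v = (G.neighborSet v).ncard := Nat.card_coe_set_eq _

lemma neighborSet_eq_singleton {V : Type*} [Finite V] {G : SimpleGraph V} {v w : V}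
    (h1 : mdeg G v = 1) (h : G.Adj v w) : G.neighborSet v = {w} := by
  rw [mdeg_eq_ncard] at h1
  refine (Set.eq_of_subset_of_ncard_le ?_ ?_ (Set.toFinite _)).symm
  · simp [h]
  · simp [h1]

lemma two_le_mdeg {V : Type*} [Finite V] {G : SimpleGraph V} {v w x : V}
    (hw : G.Adj v w) (hx : G.Adj v x) (hwx : w ≠ x) : 2 ≤ mdeg G v := by
  rw [mdeg_eq_ncard]
  have hsub : {w, x} ⊆ G.neighborSet v := by
    intro y hy; rcases hy with rfl | rfl <;> simpa [SimpleGraph.mem_neighborSet] using ‹_›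
  calc 2 = ({w, x} : Set V).ncard := (Set.ncard_pair hwx).symm
  _ ≤ _ := Set.ncard_le_ncard hsub (Set.toFinite _)

lemma neighborSet_eq_pair {V : Type*} [Finite V] {G : SimpleGraph V} {v w x : V}
    (h2 : mdeg G v ≤ 2) (hw : G.Adj v w) (hx : G.Adj v x) (hwx : w ≠ x) :
    G.neighborSet v = {w, x} := by
  rw [mdeg_eq_ncard] at h2
  refine (Set.eq_of_subset_of_ncard_le ?_ ?_ (Set.toFinite _)).symm
  · intro y hy; rcases hy with rfl | rfl <;> simpa [SimpleGraph.mem_neighborSet] using ‹_›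
  · rw [Set.ncard_pair hwx]; exact h2

lemma not_three_nbrs {V : Type*} [Finite V] {G : SimpleGraph V} {v w x y : V}
    (h2 : mdeg G v ≤ 2) (hw : G.Adj v w) (hx : G.Adj v x) (hy : G.Adj v y)
    (hwx : w ≠ x) (hwy : w ≠ y) (hxy : x ≠ y) : False := by
  rw [mdeg_eq_ncard] at h2
  have hsub : {w, x, y} ⊆ G.neighborSet v := by
    intro z hz; rcases hz with rfl | rfl | rfl <;> simpa [SimpleGraph.mem_neighborSet] using ‹_›
  have h3 : ({w, x, y} : Set V).ncard = 3 := by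
    rw [Set.ncard_insert_of_notMem (by simp [hwx, hwy]) (Set.toFinite _), Set.ncard_pair hxy]
  have := Set.ncard_le_ncard hsub (Set.toFinite _)
  omega

lemma path_iso_of (n : ℕ) (hn : 3 ≤ n) (G : SimpleGraph (Fin n)) (hG : G.Connected)
    (hdeg : ∀ v, mdeg G v ≤ 2) (a : Fin n) (ha : mdeg G a = 1) :
    Nonempty (G ≃g SimpleGraph.pathGraph n) := by
  classical
  have hbne : (G.neighborSet a).Nonempty := by
    rw [mdeg_eq_ncard] at ha
    exact Set.nonempty_of_ncard_ne_zero (by omega)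
  obtain ⟨b, hb⟩ := hbne
  have hb : G.Adj a b := hb
  let next : Fin n → Fin n → Fin n := fun p c =>
    if h : ∃ w, G.Adj c w ∧ w ≠ p then h.choose else c
  let F : ℕ → Fin n × Fin n := fun k => Nat.rec (a, b) (fun _ q => (q.2, next q.1 q.2)) k
  let f : ℕ → Fin n := fun k => (F k).1
  have hf0 : f 0 = a := rfl
  have hf1 : f 1 = b := rfl
  have hfs : ∀ k, f (k + 2) = next (f k) (f (k + 1)) := fun k => rfl
  -- main induction
  have main : ∀ k, k ≤ n - 1 →
      (∀ i j, i ≤ k → j ≤ k → f i = f j → i = j) ∧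
      (∀ j, j + 1 ≤ k → G.Adj (f j) (f (j + 1))) := by
    intro k
    induction k with
    | zero => exact fun _ => ⟨fun i j hi hj _ => by omega, fun j hj => by omega⟩
    | succ k ih =>
      intro hk1
      obtain ⟨hinj, hadj⟩ := ih (by omega)
      have hstep : G.Adj (f k) (f (k + 1)) ∧ ∀ i, i ≤ k → f i ≠ f (k + 1) := by
        obtain _ | m := k
        · exact ⟨hb, by
            intro i hi hcon
            have : i = 0 := by omega
            subst this
            exact hb.ne hcon⟩
        · -- k = m + 1
          have hadjm : G.Adj (f m) (f (m + 1)) := hadj m (by omega)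
          have hex : ∃ w, G.Adj (f (m + 1)) w ∧ w ≠ f m := by
            by_contra hno
            push_neg at hno
            have hNk : G.neighborSet (f (m + 1)) = {f m} := by
              apply subset_antisymm
              · intro w hw
                exact hno w hw
              · intro w hw
                simp only [Set.mem_singleton_iff] at hw
                subst hw
                exact hadjm.symm
            set S : Set (Fin n) := ↑((Finset.range (m + 2)).image f) with hS
            have haS : a ∈ S := by
              simp only [hS, Finset.coe_image, Set.mem_image]
              exact ⟨0, by simp, hf0⟩
            have hclosed : ∀ v ∈ S, ∀ w, G.Adj v w → w ∈ S := by
              intro v hv w hw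
              simp only [hS, Finset.coe_image, Set.mem_image, Finset.mem_coe,
                Finset.mem_range] at hv ⊢
              obtain ⟨j, hj, rfl⟩ := hv
              have hj' : j ≤ m + 1 := by omega
              rcases Nat.eq_zero_or_pos j with rfl | hjpos
              · -- v = a
                have hNa : G.neighborSet a = {b} := neighborSet_eq_singleton ha hb
                have : w ∈ G.neighborSet a := hw
                rw [hNa] at this
                simp only [Set.mem_singleton_iff] at this
                exact ⟨1, by omega, by rw [hf1, this]⟩
              · rcases Nat.lt_or_ge j (m + 1) with hjlt | hjge
                · -- 1 ≤ j ≤ m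
                  have ha1 : G.Adj (f j) (f (j - 1)) := by
                    have h' := hadj (j - 1) (by omega)
                    rw [show j - 1 + 1 = j by omega] at h'
                    exact h'.symm
                  have ha2 : G.Adj (f j) (f (j + 1)) := hadj j (by omega)
                  have hne : f (j - 1) ≠ f (j + 1) := by
                    intro hcon
                    have := hinj (j - 1) (j + 1) (by omega) (by omega) hcon
                    omega
                  have hNj := neighborSet_eq_pair (hdeg (f j)) ha1 ha2 hne
                  have : w ∈ G.neighborSet (f j) := hw
                  rw [hNj] at this
                  rcases this with rfl | rfl
                  · exact ⟨j - 1, by omega, rfl⟩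
                  · exact ⟨j + 1, by omega, rfl⟩
                · -- j = m + 1
                  have : j = m + 1 := by omega
                  subst this
                  have : w ∈ G.neighborSet (f (m + 1)) := hw
                  rw [hNk] at this
                  simp only [Set.mem_singleton_iff] at this
                  exact ⟨m, by omega, this.symm⟩
            have hall : ∀ v : Fin n, v ∈ S := fun v => closed_eq_univ hG haS hclosed v
            have hsub : (Finset.univ : Finset (Fin n)) ⊆ (Finset.range (m + 2)).image f :=
              fun v _ => hall v
            have hc1 := Finset.card_le_card hsub
            have hc2 := Finset.card_image_le (s := Finset.range (m + 2)) (f := f)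
            rw [Finset.card_range] at hc2
            simp only [Finset.card_univ, Fintype.card_fin] at hc1
            omega
          have hval : f (m + 2) = hex.choose := by
            rw [hfs m]
            exact dif_pos hex
          obtain ⟨hadjnew, hnenew⟩ := hex.choose_spec
          rw [← hval] at hadjnew hnenew
          refine ⟨hadjnew, ?_⟩
          intro i hi hcon
          -- hcon : f i = f (m + 2)
          rcases Nat.lt_trichotomy i m with hilt | rfl | higt
          · rcases Nat.eq_zero_or_pos i with rfl | hipos
            · -- i = 0, m ≥ 1 : a gets two distinct neighbors b, f (m+1)
              rw [hf0] at hcon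
              have h1a : G.Adj a b := hb
              have h2a : G.Adj a (f (m + 1)) := by
                rw [hcon]; exact hadjnew.symm
              have hne1 : b ≠ f (m + 1) := by
                rw [← hf1]
                intro hcon2
                have := hinj 1 (m + 1) (by omega) (by omega) hcon2
                omega
              have := two_le_mdeg h1a h2a hne1
              omega
            · -- 1 ≤ i < m : f i gets three neighbors
              have ha1 : G.Adj (f i) (f (i - 1)) := by
                have h' := hadj (i - 1) (by omega)
                rw [show i - 1 + 1 = i by omega] at h'
                exact h'.symm
              have ha2 : G.Adj (f i) (f (i + 1)) := hadj i (by omega)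
              have ha3 : G.Adj (f i) (f (m + 1)) := by
                rw [hcon]; exact hadjnew.symm
              have hd1 : f (i - 1) ≠ f (i + 1) := fun hcon2 => by
                have := hinj (i - 1) (i + 1) (by omega) (by omega) hcon2; omega
              have hd2 : f (i - 1) ≠ f (m + 1) := fun hcon2 => by
                have := hinj (i - 1) (m + 1) (by omega) (by omega) hcon2; omega
              have hd3 : f (i + 1) ≠ f (m + 1) := fun hcon2 => by
                have := hinj (i + 1) (m + 1) (by omega) (by omega) hcon2; omega
              exact not_three_nbrs (hdeg (f i)) ha1 ha2 ha3 hd1 hd2 hd3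
          · -- i = m
            exact hnenew hcon.symm
          · -- i = m + 1
            have : i = m + 1 := by omega
            subst this
            exact hadjnew.ne hcon
      -- assemble P (k+1)
      obtain ⟨hadjk, hnewk⟩ := hstep
      constructor
      · intro i j hi hj hij
        rcases Nat.lt_or_ge i (k + 1) with hi' | hi' <;>
          rcases Nat.lt_or_ge j (k + 1) with hj' | hj'
        · exact hinj i j (by omega) (by omega) hij
        · have : j = k + 1 := by omega
          subst this
          exact absurd hij (hnewk i (by omega))
        · have : i = k + 1 := by omega
          subst this
          exact absurd hij.symm (hnewk j (by omega))
        · omega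
      · intro j hj
        rcases Nat.lt_or_ge (j + 1) (k + 1) with hj' | hj'
        · exact hadj j (by omega)
        · have : j = k := by omega
          subst this
          exact hadjk
  -- conclusion: build the isomorphism
  obtain ⟨hinj, hadj⟩ := main (n - 1) le_rfl
  have hvlt : ∀ i : Fin n, (i : ℕ) ≤ n - 1 := fun i => by omega
  have hsinj : Function.Injective (fun i : Fin n => f (i : ℕ)) := by
    intro i j hij
    exact Fin.ext (hinj _ _ (hvlt i) (hvlt j) hij)
  have hsbij : Function.Bijective (fun i : Fin n => f (i : ℕ)) :=
    Finite.injective_iff_bijective.mp hsinj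
  have hsurj : ∀ v : Fin n, ∃ j, j ≤ n - 1 ∧ f j = v := by
    intro v
    obtain ⟨i, hi⟩ := hsbij.2 v
    exact ⟨(i : ℕ), hvlt i, hi⟩
  -- neighbor set characterizations
  have hadj01 : G.Adj (f 0) (f 1) := hadj 0 (by omega)
  have hN0 : G.neighborSet (f 0) = {f 1} := by
    rw [hf0] at hadj01 ⊢
    exact neighborSet_eq_singleton ha hadj01
  have hNmid : ∀ j, 1 ≤ j → j + 1 ≤ n - 1 →
      G.neighborSet (f j) = {f (j - 1), f (j + 1)} := by
    intro j hj1 hj2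
    have ha1 : G.Adj (f j) (f (j - 1)) := by
      have h' := hadj (j - 1) (by omega)
      rw [show j - 1 + 1 = j by omega] at h'
      exact h'.symm
    have ha2 : G.Adj (f j) (f (j + 1)) := hadj j hj2
    have hne : f (j - 1) ≠ f (j + 1) := fun hcon => by
      have := hinj (j - 1) (j + 1) (by omega) (by omega) hcon; omega
    exact neighborSet_eq_pair (hdeg (f j)) ha1 ha2 hne
  have hadjlast : G.Adj (f (n - 2)) (f (n - 1)) := by
    have h' := hadj (n - 2) (by omega)
    rw [show n - 2 + 1 = n - 1 by omega] at h'
    exact h'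
  have hNlast : G.neighborSet (f (n - 1)) = {f (n - 2)} := by
    apply subset_antisymm
    · intro w hw
      have hw' : G.Adj (f (n - 1)) w := hw
      obtain ⟨j, hj, rfl⟩ := hsurj w
      simp only [Set.mem_singleton_iff]
      rcases Nat.lt_trichotomy j (n - 2) with hjlt | rfl | hjgt
      · rcases Nat.eq_zero_or_pos j with rfl | hjpos
        · -- f j = a with two neighbors
          exfalso
          rw [hf0] at hw'
          have h1a : G.Adj a b := hb
          have h2a : G.Adj a (f (n - 1)) := hw'.symm
          have hne1 : b ≠ f (n - 1) := by
            rw [← hf1]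
            intro hcon2
            have := hinj 1 (n - 1) (by omega) (by omega) hcon2
            omega
          have := two_le_mdeg h1a h2a hne1
          omega
        · -- three neighbors at f j
          exfalso
          have ha1 : G.Adj (f j) (f (j - 1)) := by
            have h' := hadj (j - 1) (by omega)
            rw [show j - 1 + 1 = j by omega] at h'
            exact h'.symm
          have ha2 : G.Adj (f j) (f (j + 1)) := hadj j (by omega)
          have ha3 : G.Adj (f j) (f (n - 1)) := hw'.symm
          have hd1 : f (j - 1) ≠ f (j + 1) := fun hcon2 => by
            have := hinj (j - 1) (j + 1) (by omega) (by omega) hcon2; omega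
          have hd2 : f (j - 1) ≠ f (n - 1) := fun hcon2 => by
            have := hinj (j - 1) (n - 1) (by omega) (by omega) hcon2; omega
          have hd3 : f (j + 1) ≠ f (n - 1) := fun hcon2 => by
            have := hinj (j + 1) (n - 1) (by omega) (by omega) hcon2; omega
          exact not_three_nbrs (hdeg (f j)) ha1 ha2 ha3 hd1 hd2 hd3
      · rfl
      · have : j = n - 1 := by omega
        subst this
        exact absurd rfl hw'.ne
    · intro w hw
      simp only [Set.mem_singleton_iff] at hw
      subst hw
      exact hadjlast.symm
  -- adjacency characterization
  have hiff : ∀ i j, i ≤ n - 1 → j ≤ n - 1 →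
      (G.Adj (f i) (f j) ↔ (i + 1 = j ∨ j + 1 = i)) := by
    intro i j hi hj
    constructor
    · intro hadjij
      have hmem : f i ∈ G.neighborSet (f j) := hadjij.symm
      rcases Nat.eq_zero_or_pos j with rfl | hjpos
      · rw [hN0] at hmem
        simp only [Set.mem_singleton_iff] at hmem
        have := hinj i 1 hi (by omega) hmem
        omega
      · rcases Nat.lt_or_ge j (n - 1) with hjlt | hjge
        · rw [hNmid j hjpos (by omega)] at hmem
          rcases hmem with hmem | hmem
          · have := hinj i (j - 1) hi (by omega) hmem
            omega
          · have := hinj i (j + 1) hi (by omega) hmem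
            omega
        · have : j = n - 1 := by omega
          subst this
          rw [hNlast] at hmem
          simp only [Set.mem_singleton_iff] at hmem
          have := hinj i (n - 2) hi (by omega) hmem
          omega
    · intro h
      rcases h with h | h
      · have h' := hadj i (by omega)
        rwa [h] at h'
      · have h' := hadj j (by omega)
        rw [h] at h'
        exact h'.symm
  -- build the iso
  have hP : ∀ u v : Fin n,
      G.Adj (f (u : ℕ)) (f (v : ℕ)) ↔ (SimpleGraph.pathGraph n).Adj u v := by
    intro u v
    rw [SimpleGraph.pathGraph_adj]
    exact hiff (u : ℕ) (v : ℕ) (hvlt u) (hvlt v)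
  let P : SimpleGraph.pathGraph n ≃g G := ⟨Equiv.ofBijective _ hsbij, fun {u v} => hP u v⟩
  exact ⟨P.symm⟩

lemma prod_mdeg_iso {V W : Type*} [Fintype V] [Fintype W] (G : SimpleGraph V)
    (G' : SimpleGraph W) (e : G ≃g G') (h : ℕ → ℕ) :
    ∏ v : V, h (mdeg G v) = ∏ w : W, h (mdeg G' w) :=
  Fintype.prod_equiv e.toEquiv _ _ (fun v => by rw [mdeg_map G G' e v]; rfl)

lemma mZ1_iso {V W : Type*} [Fintype V] [Fintype W] (G : SimpleGraph V)
    (G' : SimpleGraph W) (e : G ≃g G') : mZ1 G = mZ1 G' :=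
  prod_mdeg_iso G G' e (· ^ 2)

lemma mZ2_iso {V W : Type*} [Fintype V] [Fintype W] (G : SimpleGraph V)
    (G' : SimpleGraph W) (e : G ≃g G') : mZ2 G = mZ2 G' :=
  prod_mdeg_iso G G' e (fun d => d ^ d)

section star
variable {n : ℕ}

lemma starGraph_adj [NeZero n] (u v : Fin n) :
    (_root_.starGraph n).Adj u v ↔ u ≠ v ∧ (u = 0 ∨ v = 0) := by
  simp only [_root_.starGraph, SimpleGraph.fromRel_adj, Fin.ext_iff, Fin.val_zero]

lemma neighborSet_starGraph_zero [NeZero n] :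
    (_root_.starGraph n).neighborSet (0 : Fin n) = {(0 : Fin n)}ᶜ := by
  ext v
  simp [SimpleGraph.mem_neighborSet, _root_.starGraph_adj, ne_comm]

lemma mdeg_starGraph_zero (hn : 3 ≤ n) :
    haveI : NeZero n := ⟨by omega⟩
    mdeg (_root_.starGraph n) (0 : Fin n) = n - 1 := by
  haveI : NeZero n := ⟨by omega⟩
  classical
  rw [mdeg_eq_ncard, neighborSet_starGraph_zero]
  have hfin : ({(0 : Fin n)}ᶜ : Set (Fin n)).Finite := Set.toFinite _
  rw [Set.ncard_eq_toFinset_card _ hfin]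
  have : hfin.toFinset = Finset.univ.erase 0 := by
    ext v; simp [Finset.mem_erase]
  rw [this, Finset.card_erase_of_mem (Finset.mem_univ _)]
  simp

lemma mdeg_starGraph_ne [NeZero n] (v : Fin n) (hv : v ≠ 0) :
    mdeg (_root_.starGraph n) v = 1 := by
  rw [mdeg_eq_ncard]
  have : (_root_.starGraph n).neighborSet v = {0} := by
    ext w
    simp only [SimpleGraph.mem_neighborSet, _root_.starGraph_adj, Set.mem_singleton_iff]
    constructor
    · rintro ⟨hne, h | h⟩
      · exact absurd h hv
      · exact h
    · rintro rfl
      exact ⟨hv, Or.inr rfl⟩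
  rw [this, Set.ncard_singleton]

lemma mZ1_starGraph (hn : 3 ≤ n) : mZ1 (_root_.starGraph n) = (n - 1) ^ 2 := by
  haveI : NeZero n := ⟨by omega⟩
  rw [mZ1, Fintype.prod_eq_single (0 : Fin n)
    (fun v hv => by rw [mdeg_starGraph_ne v hv]; norm_num)]
  rw [mdeg_starGraph_zero hn]

/-- the iso construction for the star equality case -/
lemma star_iso_of (hn : 3 ≤ n) (G : SimpleGraph (Fin n)) (c : Fin n)
    (hc : ∀ v, v ≠ c → G.Adj c v) (h1 : ∀ v, v ≠ c → mdeg G v = 1) :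
    Nonempty (G ≃g _root_.starGraph n) := by
  haveI : NeZero n := ⟨by omega⟩
  have hGadj : ∀ u v, G.Adj u v ↔ u ≠ v ∧ (u = c ∨ v = c) := by
    intro u v
    constructor
    · intro h
      refine ⟨h.ne, ?_⟩
      by_contra hcon
      push_neg at hcon
      obtain ⟨huc, hvc⟩ := hcon
      have h2 : G.Adj u c := (hc u huc).symm
      have hne : v ≠ c := hvc
      have : 2 ≤ mdeg G u := two_le_mdeg h h2 hne
      rw [h1 u huc] at this
      omega
    · rintro ⟨hne, rfl | rfl⟩
      · exact hc v (fun h => hne h.symm)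
      · exact (hc u hne).symm
  let e : Fin n ≃ Fin n := Equiv.swap c 0
  have he : ∀ u : Fin n, e u = 0 ↔ u = c := by
    intro u
    rw [Equiv.swap_apply_eq_iff, Equiv.swap_apply_right]
  refine ⟨⟨e, ?_⟩⟩
  intro u v
  rw [_root_.starGraph_adj, hGadj u v, he u, he v]
  simp only [ne_eq, EmbeddingLike.apply_eq_iff_eq, e]

end star

section path
variable {n : ℕ}

lemma mdeg_pathGraph (hn : 3 ≤ n) (v : Fin n) :
    mdeg (SimpleGraph.pathGraph n) v = if (v : ℕ) = 0 ∨ (v : ℕ) = n - 1 then 1 else 2 := by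
  rw [mdeg_eq_ncard]
  rcases Nat.eq_zero_or_pos (v : ℕ) with hv0 | hvpos
  · have : (SimpleGraph.pathGraph n).neighborSet v = {(⟨1, by omega⟩ : Fin n)} := by
      ext w
      simp only [SimpleGraph.mem_neighborSet, SimpleGraph.pathGraph_adj,
        Set.mem_singleton_iff, hv0, Fin.ext_iff]
      omega
    rw [this, Set.ncard_singleton, if_pos (Or.inl hv0)]
  · rcases Nat.lt_or_ge (v : ℕ) (n - 1) with hvlt | hvge
    · have : (SimpleGraph.pathGraph n).neighborSet v =
          {(⟨(v : ℕ) - 1, by omega⟩ : Fin n), (⟨(v : ℕ) + 1, by omega⟩ : Fin n)} := by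
        ext w
        simp only [SimpleGraph.mem_neighborSet, SimpleGraph.pathGraph_adj,
          Set.mem_insert_iff, Set.mem_singleton_iff, Fin.ext_iff]
        omega
      rw [this, Set.ncard_pair (by simp only [ne_eq, Fin.mk.injEq]; omega), if_neg (by omega)]
    · have hv : (v : ℕ) = n - 1 := by have := v.isLt; omega
      have : (SimpleGraph.pathGraph n).neighborSet v = {(⟨n - 2, by omega⟩ : Fin n)} := by
        ext w
        simp only [SimpleGraph.mem_neighborSet, SimpleGraph.pathGraph_adj,
          Set.mem_singleton_iff, hv, Fin.ext_iff]
        have := w.isLt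
        omega
      rw [this, Set.ncard_singleton, if_pos (Or.inr hv)]

lemma mZ2_pathGraph (hn : 3 ≤ n) : mZ2 (SimpleGraph.pathGraph n) = 4 ^ (n - 2) := by
  classical
  rw [mZ2]
  have hterm : ∀ v : Fin n,
      (mdeg (SimpleGraph.pathGraph n) v) ^ (mdeg (SimpleGraph.pathGraph n) v) =
      if (v : ℕ) = 0 ∨ (v : ℕ) = n - 1 then 1 else 4 := by
    intro v
    rw [mdeg_pathGraph hn v]
    split <;> norm_num
  rw [Finset.prod_congr rfl (fun v _ => hterm v), Finset.prod_ite, Finset.prod_const_one,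
    Finset.prod_const, one_mul]
  congr 1
  have h2 : (Finset.univ.filter (fun v : Fin n => (v : ℕ) = 0 ∨ (v : ℕ) = n - 1)).card = 2 := by
    have : (Finset.univ.filter (fun v : Fin n => (v : ℕ) = 0 ∨ (v : ℕ) = n - 1)) =
        {(⟨0, by omega⟩ : Fin n), (⟨n - 1, by omega⟩ : Fin n)} := by
      ext v
      simp [Fin.ext_iff]
    rw [this, Finset.card_insert_of_notMem (by simp only [Finset.mem_singleton, Fin.mk.injEq]; omega),
      Finset.card_singleton]
  have := Finset.card_filter_add_card_filter_not
    (s := (Finset.univ : Finset (Fin n)))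
    (p := fun v : Fin n => (v : ℕ) = 0 ∨ (v : ℕ) = n - 1)
  rw [Finset.card_univ, Fintype.card_fin] at this
  omega

end path

theorem stmt4 (n k : ℕ) (hn : 3 ≤ n) (hk1 : 1 ≤ k) (hk2 : k ≤ n - 1)
    (G : SimpleGraph (Fin n)) (hG : G.Connected) (hκ : VertexConnAtMost G k) :
    ((n - 1) ^ 2 ≤ mZ1 G ∧ (mZ1 G = (n - 1) ^ 2 ↔ Nonempty (G ≃g _root_.starGraph n))) ∧
      (4 ^ (n - 2) ≤ mZ2 G ∧
        (mZ2 G = 4 ^ (n - 2) ↔ Nonempty (G ≃g SimpleGraph.pathGraph n))) := by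
  classical
  letI : DecidableRel G.Adj := Classical.decRel _
  have hd1 : ∀ v, 1 ≤ mdeg G v :=
    one_le_mdeg hG (by rw [Fintype.card_fin]; omega)
  have hcardu : (Finset.univ : Finset (Fin n)).card = n := by simp
  have hsum : 2 * (n - 1) ≤ ∑ v, mdeg G v := by
    have h := sum_mdeg_lb G hG
    rw [Fintype.card_fin] at h
    calc 2 * (n - 1) ≤ ∑ v, G.degree v := h
    _ = ∑ v, mdeg G v := Finset.sum_congr rfl (fun v _ => (mdeg_eq_degree G v).symm)
  have hkey : (∑ v, mdeg G v) + 1 ≤ (∏ v, mdeg G v) + (Finset.univ : Finset (Fin n)).card :=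
    key_prod_ge Finset.univ (mdeg G) (fun v _ => hd1 v)
  rw [hcardu] at hkey
  have hpilb : n - 1 ≤ ∏ v, mdeg G v := by omega
  have hmz1 : mZ1 G = (∏ v, mdeg G v) ^ 2 := by
    rw [mZ1, Finset.prod_pow]
  -- second index setup
  have hle4 : ∀ v ∈ Finset.univ, 4 ^ (mdeg G v - 1) ≤ (mdeg G v) ^ (mdeg G v) :=
    fun v _ => pow4_le _ (hd1 v)
  have hprodle : ∏ v, 4 ^ (mdeg G v - 1) ≤ mZ2 G :=
    Finset.prod_le_prod (fun v _ => Nat.zero_le _) hle4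
  have hpe : ∏ v, 4 ^ (mdeg G v - 1) = 4 ^ (∑ v, (mdeg G v - 1)) :=
    Finset.prod_pow_eq_pow_sum _ _ _
  have hsumsub : ∑ v, (mdeg G v - 1) + n = ∑ v, mdeg G v := by
    have hcg : ∀ v ∈ Finset.univ, mdeg G v = (mdeg G v - 1) + 1 :=
      fun v _ => by have := hd1 v; omega
    conv_rhs => rw [Finset.sum_congr rfl hcg]
    rw [Finset.sum_add_distrib, Finset.sum_const, hcardu, smul_eq_mul, mul_one]
  have hs2 : n - 2 ≤ ∑ v, (mdeg G v - 1) := by omega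
  have hb2 : 4 ^ (n - 2) ≤ mZ2 G := by
    calc 4 ^ (n - 2) ≤ 4 ^ (∑ v, (mdeg G v - 1)) := Nat.pow_le_pow_right (by norm_num) hs2
    _ = ∏ v, 4 ^ (mdeg G v - 1) := hpe.symm
    _ ≤ mZ2 G := hprodle
  refine ⟨⟨by rw [hmz1]; exact Nat.pow_le_pow_left hpilb 2, ?_⟩, hb2, ?_⟩
  · -- mZ1 equality iff star
    constructor
    · intro heq
      have hpi : ∏ v, mdeg G v = n - 1 :=
        Nat.pow_left_injective (n := 2) (by norm_num)
          (show (∏ v, mdeg G v) ^ 2 = (n - 1) ^ 2 by rw [← hmz1, heq])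
      have hsumub : ∑ v, mdeg G v ≤ 2 * n - 2 := by omega
      have honec : ∀ v w : Fin n, v ≠ w → 2 ≤ mdeg G v → 2 ≤ mdeg G w → False := by
        intro v w hvw h2v h2w
        have h : (∑ u, mdeg G u) + 2 ≤ (∏ u, mdeg G u) + (Finset.univ : Finset (Fin n)).card :=
          key_prod_ge_two Finset.univ (mdeg G) (fun i _ => hd1 i) v w
            (Finset.mem_univ v) (Finset.mem_univ w) hvw h2v h2w
        rw [hpi, hcardu] at h
        omega
      have hex2 : ∃ c, 2 ≤ mdeg G c := by
        by_contra h
        push_neg at h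
        have hall1 : ∀ v ∈ Finset.univ, mdeg G v = 1 :=
          fun v _ => by have := hd1 v; have := h v; omega
        have : ∑ v, mdeg G v = n := by
          rw [Finset.sum_congr rfl hall1, Finset.sum_const, hcardu, smul_eq_mul, mul_one]
        omega
      obtain ⟨c, hc2⟩ := hex2
      have hrest : ∀ v, v ≠ c → mdeg G v = 1 := by
        intro v hv
        by_contra h
        have h2v : 2 ≤ mdeg G v := by have := hd1 v; omega
        exact honec v c hv h2v hc2
      have hdc : mdeg G c = n - 1 := by
        have hsplit : ∑ v, mdeg G v = mdeg G c + ∑ v ∈ Finset.univ.erase c, mdeg G v :=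
          (Finset.add_sum_erase _ _ (Finset.mem_univ c)).symm
        have herase : ∑ v ∈ Finset.univ.erase c, mdeg G v = n - 1 := by
          rw [Finset.sum_congr rfl (fun v hv => hrest v (Finset.mem_erase.1 hv).1),
            Finset.sum_const, Finset.card_erase_of_mem (Finset.mem_univ c), hcardu,
            smul_eq_mul, mul_one]
        omega
      have hcadj : ∀ v, v ≠ c → G.Adj c v := by
        have hNc : G.neighborSet c = {c}ᶜ := by
          apply Set.eq_of_subset_of_ncard_le
          · intro w hw
            simp only [Set.mem_compl_iff, Set.mem_singleton_iff]
            exact fun hcon => G.irrefl (hcon ▸ hw)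
          · have hfin : ({c}ᶜ : Set (Fin n)).Finite := Set.toFinite _
            rw [Set.ncard_eq_toFinset_card _ hfin]
            have : hfin.toFinset = Finset.univ.erase c := by
              ext v; simp [Finset.mem_erase]
            rw [this, Finset.card_erase_of_mem (Finset.mem_univ _), ← mdeg_eq_ncard, hdc]
            simp
          · exact Set.toFinite _
        intro v hv
        have : v ∈ G.neighborSet c := by
          rw [hNc]
          simpa using hv
        exact this
      exact star_iso_of hn G c hcadj hrest
    · rintro ⟨e⟩
      rw [mZ1_iso G _ e, mZ1_starGraph hn]
  · -- mZ2 equality iff path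
    constructor
    · intro heq
      have hseq : ∑ v, (mdeg G v - 1) = n - 2 := by
        have h1 : 4 ^ (∑ v, (mdeg G v - 1)) ≤ 4 ^ (n - 2) := by
          rw [← hpe, ← heq]; exact hprodle
        have := (pow_le_pow_iff_right₀ (by norm_num : (1:ℕ) < 4)).1 h1
        omega
      have hprodeqq : ∏ v, 4 ^ (mdeg G v - 1) = mZ2 G := by
        rw [hpe, hseq, heq]
      have hdle2 : ∀ v, mdeg G v ≤ 2 := by
        intro v
        by_contra h
        push_neg at h
        have hstrict : ∏ w, 4 ^ (mdeg G w - 1) < ∏ w, (mdeg G w) ^ (mdeg G w) :=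
          Finset.prod_lt_prod (fun i _ => pow_pos (by norm_num) _) hle4
            ⟨v, Finset.mem_univ v, pow4_lt _ (by omega)⟩
        rw [← mZ2] at hstrict
        exact absurd hprodeqq (Nat.ne_of_lt hstrict)
      have hex1 : ∃ a, mdeg G a = 1 := by
        by_contra h
        push_neg at h
        have hall2 : ∀ v ∈ Finset.univ, mdeg G v = 2 :=
          fun v _ => by have := hd1 v; have := hdle2 v; have := h v; omega
        have : ∑ v, mdeg G v = 2 * n := by
          rw [Finset.sum_congr rfl hall2, Finset.sum_const, hcardu, smul_eq_mul, mul_comm]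
        omega
      obtain ⟨a, ha1⟩ := hex1
      exact path_iso_of n hn G hG hdle2 a ha1
    · rintro ⟨e⟩
      rw [mZ2_iso G _ e, mZ2_pathGraph hn]
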